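/- PNS click probability: if Alice emits N ~ Poisson(λ) photons, Eve removes min(N, k) photons, and Bob's detector has efficiency p_c and dark count probability p_d, then the click probability is 1 - (1-p_d)(1-p_c)^{-k} e^{-p_c λ} · γ̄(k, (1-p_c)λ) - (1-p_d)·Γ̄(k, λ), where Γ̄(s,x) = Γ(s,x)/Γ(s) is the regularized upper incomplete gamma function and γ̄ = 1 - Γ̄. -/

import Mathlib

open MeasureTheory

/-- Upper incomplete gamma function `Γ(s,x) = ∫_x^∞ t^{s-1} e^{-t} dt`. -/
noncomputable def upperGamma (s x : ℝ) : ℝ :=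
  ∫ t in Set.Ioi x, t ^ (s - 1) * Real.exp (-t)

/-- Regularized upper incomplete gamma function `Γ̄(s,x) = Γ(s,x)/Γ(s)`. -/
noncomputable def regUpperGamma (s x : ℝ) : ℝ := upperGamma s x / Real.Gamma s

lemma sum_deriv_eq (m : ℕ) (t : ℝ) :
    HasDerivAt (fun t : ℝ => ∑ n ∈ Finset.range (m+1), t ^ n / n.factorial)
      (∑ n ∈ Finset.range m, t ^ n / n.factorial) t := by
  have h : HasDerivAt (fun t : ℝ => ∑ n ∈ Finset.range (m+1), t ^ n / n.factorial)
      (∑ n ∈ Finset.range (m+1), (n * t ^ (n-1) / n.factorial)) t := by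
    apply HasDerivAt.fun_sum
    intro n _
    exact (hasDerivAt_pow n t).div_const _
  convert h using 1
  rw [Finset.sum_range_succ']
  simp only [Nat.cast_zero, pow_zero, Nat.factorial_zero, Nat.cast_one, zero_mul, zero_div,
    add_zero]
  apply Finset.sum_congr rfl
  intro i _
  have : ((i+1).factorial : ℝ) = (i+1) * i.factorial := by
    rw [Nat.factorial_succ]; push_cast; ring
  rw [this]
  have hi : ((i:ℝ)+1) ≠ 0 := by positivity
  field_simp
  rw [Nat.add_sub_cancel]; push_cast; ring

lemma F_deriv (m : ℕ) (t : ℝ) :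
    HasDerivAt (fun t : ℝ =>
      -((m.factorial : ℝ) * (Real.exp (-t) * ∑ n ∈ Finset.range (m+1), t ^ n / n.factorial)))
      (t ^ m * Real.exp (-t)) t := by
  have hE : HasDerivAt (fun t : ℝ => Real.exp (-t)) (-Real.exp (-t)) t := by
    exact ((Real.hasDerivAt_exp (-t)).comp t (hasDerivAt_neg t)).congr_deriv (by simp)
  have hS := sum_deriv_eq m t
  have h := ((hE.mul hS).const_mul (m.factorial : ℝ)).neg
  refine h.congr_deriv ?_
  have hsum : ∑ n ∈ Finset.range (m+1), t ^ n / n.factorial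
      = (∑ n ∈ Finset.range m, t ^ n / n.factorial) + t ^ m / m.factorial :=
    Finset.sum_range_succ _ _
  rw [hsum]
  have hm : (m.factorial : ℝ) ≠ 0 := by positivity
  field_simp
  ring

lemma tendsto_F (m : ℕ) :
    Filter.Tendsto (fun t : ℝ =>
      -((m.factorial : ℝ) * (Real.exp (-t) * ∑ n ∈ Finset.range (m+1), t ^ n / n.factorial)))
      Filter.atTop (nhds 0) := by
  have h : Filter.Tendsto (fun t : ℝ => ∑ n ∈ Finset.range (m+1), t ^ n * Real.exp (-t) / n.factorial)
      Filter.atTop (nhds 0) := by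
    have key : ∀ n : ℕ, Filter.Tendsto (fun t : ℝ => t ^ n * Real.exp (-t) / n.factorial)
        Filter.atTop (nhds 0) := by
      intro n
      simpa using (Real.tendsto_pow_mul_exp_neg_atTop_nhds_zero n).div_const (n.factorial : ℝ)
    have h0 : (0:ℝ) = ∑ n ∈ Finset.range (m+1), (0:ℝ) := by simp
    rw [h0]
    exact tendsto_finset_sum _ (fun n _ => key n)
  have h2 := (h.const_mul (m.factorial : ℝ)).neg
  rw [mul_zero, neg_zero] at h2
  convert h2 using 2 with t
  rw [neg_inj]
  congr 1
  rw [Finset.mul_sum]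
  apply Finset.sum_congr rfl
  intro n _
  ring

lemma integrable_aux (m : ℕ) (x : ℝ) (hx : 0 < x) :
    IntegrableOn (fun t : ℝ => t ^ m * Real.exp (-t)) (Set.Ioi x) := by
  have h := Real.GammaIntegral_convergent (s := (m:ℝ)+1) (by positivity)
  have h2 : IntegrableOn (fun t : ℝ => t ^ m * Real.exp (-t)) (Set.Ioi 0) := by
    apply h.congr_fun _ measurableSet_Ioi
    intro t ht
    show Real.exp (-t) * t ^ ((m:ℝ) + 1 - 1) = t ^ m * Real.exp (-t)
    rw [add_sub_cancel_right, Real.rpow_natCast]; ring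
  exact h2.mono_set (Set.Ioi_subset_Ioi hx.le)

lemma upperGamma_nat (m : ℕ) (x : ℝ) (hx : 0 < x) :
    upperGamma (m+1) x
      = m.factorial * (Real.exp (-x) * ∑ n ∈ Finset.range (m+1), x ^ n / n.factorial) := by
  have hcong : upperGamma (m+1) x = ∫ t in Set.Ioi x, t ^ m * Real.exp (-t) := by
    unfold upperGamma
    apply setIntegral_congr_fun measurableSet_Ioi
    intro t ht
    have ht0 : 0 < t := hx.trans ht
    show t ^ ((m:ℝ) + 1 - 1) * Real.exp (-t) = t ^ m * Real.exp (-t)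
    have h1 : ((m:ℝ) + 1 - 1) = (m:ℝ) := by ring
    rw [h1, Real.rpow_natCast]
  rw [hcong]
  rw [integral_Ioi_of_hasDerivAt_of_tendsto' (fun t _ => F_deriv m t) (integrable_aux m x hx)
    (tendsto_F m)]
  ring

lemma regUpperGamma_nat (k : ℕ) (hk : 1 ≤ k) (x : ℝ) (hx : 0 < x) :
    regUpperGamma k x = Real.exp (-x) * ∑ n ∈ Finset.range k, x ^ n / n.factorial := by
  obtain ⟨m, rfl⟩ := Nat.exists_eq_add_of_le hk
  have hcast : ((1 + m : ℕ) : ℝ) = (m : ℝ) + 1 := by push_cast; ring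
  rw [regUpperGamma, hcast, upperGamma_nat m x hx, show (1+m) = m+1 from by ring,
    Real.Gamma_nat_eq_factorial]
  have hm : (m.factorial : ℝ) ≠ 0 := by positivity
  field_simp

/-- PNS click probability: Alice emits `N ~ Poisson(λ)` photons, Eve removes
`min(N,k)` photons, and Bob's detector has efficiency `p_c` and dark count
probability `p_d`. -/
theorem pns_click_prob (lam : ℝ) (k : ℕ) (pc pd : ℝ) (hlam : 0 < lam) (hk : 1 ≤ k)
    (hpc : pc ∈ Set.Ico (0:ℝ) 1) (hpd : pd ∈ Set.Ico (0:ℝ) 1) :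
    ∑' n : ℕ, (1 - (1 - pd) * (1 - pc) ^ (n - k))
        * (Real.exp (-lam) * lam ^ n / n.factorial)
      = 1 - (1 - pd) * (1 - pc) ^ (-(k : ℤ)) * Real.exp (-(pc * lam))
            * (1 - regUpperGamma k ((1 - pc) * lam))
          - (1 - pd) * regUpperGamma k lam := by
  obtain ⟨hpc0, hpc1⟩ := hpc
  obtain ⟨hpd0, hpd1⟩ := hpd
  set q : ℝ := 1 - pc with hqdef
  have hq : 0 < q := by simp only [hqdef]; linarith
  have hq1 : q ≤ 1 := by simp only [hqdef]; linarith
  have hx : 0 < q * lam := by positivity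
  have hqk : (q : ℝ) ^ k ≠ 0 := by positivity
  set p : ℕ → ℝ := fun n => Real.exp (-lam) * lam ^ n / n.factorial with hpdef
  have hexp : ∀ y : ℝ, ∑' n : ℕ, y ^ n / n.factorial = Real.exp y := by
    intro y
    rw [Real.exp_eq_exp_ℝ, NormedSpace.exp_eq_tsum_div]
  have hsum : ∀ y : ℝ, Summable (fun n : ℕ => y ^ n / n.factorial) :=
    Real.summable_pow_div_factorial
  have htail : ∀ y : ℝ, ∑' n : ℕ, y ^ (n + k) / (n + k).factorial
      = Real.exp y - ∑ i ∈ Finset.range k, y ^ i / i.factorial := by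
    intro y
    have h1 := Summable.sum_add_tsum_nat_add k (hsum y)
    rw [hexp y] at h1
    linarith
  have hp : Summable p := by
    apply ((hsum lam).mul_left (Real.exp (-lam))).congr
    intro n
    simp [hpdef, mul_div_assoc]
  have hpnn : ∀ n, 0 ≤ p n := by
    intro n
    simp only [hpdef]
    positivity
  have hg : Summable (fun n : ℕ => q ^ (n - k) * p n) := by
    apply Summable.of_nonneg_of_le _ _ hp
    · intro n
      have := hpnn n
      positivity
    · intro n
      have h1 : q ^ (n - k) ≤ 1 := pow_le_one₀ hq.le hq1
      calc q ^ (n - k) * p n ≤ 1 * p n := by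
            exact mul_le_mul_of_nonneg_right h1 (hpnn n)
        _ = p n := one_mul _
  have split : (∑' n : ℕ, (1 - (1 - pd) * q ^ (n - k)) * p n)
      = (∑' n, p n) - (1 - pd) * ∑' n, q ^ (n - k) * p n := by
    have h1 : ∀ n : ℕ, (1 - (1 - pd) * q ^ (n - k)) * p n
        = p n - (1 - pd) * (q ^ (n - k) * p n) := fun n => by ring
    rw [tsum_congr h1, Summable.tsum_sub hp (hg.mul_left _), tsum_mul_left]
  have hp1 : ∑' n, p n = 1 := by
    have h1 : ∑' n, p n = Real.exp (-lam) * ∑' n : ℕ, lam ^ n / n.factorial := by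
      rw [← tsum_mul_left]
      exact tsum_congr fun n => by simp [hpdef, mul_div_assoc]
    rw [h1, hexp, ← Real.exp_add]
    simp
  have hhead : ∑ i ∈ Finset.range k, q ^ (i - k) * p i
      = Real.exp (-lam) * ∑ i ∈ Finset.range k, lam ^ i / i.factorial := by
    rw [Finset.mul_sum]
    apply Finset.sum_congr rfl
    intro i hi
    rw [Nat.sub_eq_zero_of_le (Finset.mem_range.mp hi).le, pow_zero, one_mul]
    simp [hpdef, mul_div_assoc]
  have htailg : ∑' n : ℕ, q ^ ((n + k) - k) * p (n + k)
      = (q ^ k)⁻¹ * (Real.exp (-lam)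
        * (Real.exp (q * lam) - ∑ i ∈ Finset.range k, (q * lam) ^ i / i.factorial)) := by
    have h1 : ∀ n : ℕ, q ^ ((n + k) - k) * p (n + k)
        = (q ^ k)⁻¹ * Real.exp (-lam) * ((q * lam) ^ (n + k) / (n + k).factorial) := by
      intro n
      simp only [Nat.add_sub_cancel, hpdef, mul_pow]
      field_simp
      ring
    rw [tsum_congr h1, tsum_mul_left, htail]
    ring
  have hgval := Summable.sum_add_tsum_nat_add k hg
  rw [hhead, htailg] at hgval
  rw [split, hp1, ← hgval]
  have hz : q ^ (-(k:ℤ)) = (q ^ k)⁻¹ := by rw [zpow_neg, zpow_natCast]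
  have hA := regUpperGamma_nat k hk (q * lam) hx
  have hB := regUpperGamma_nat k hk lam hlam
  have hkey : Real.exp (-(pc * lam)) = Real.exp (-lam) * Real.exp (q * lam) := by
    rw [← Real.exp_add]
    congr 1
    simp only [hqdef]
    ring
  have hXinv : Real.exp (q * lam) * Real.exp (-(q * lam)) = 1 := by
    rw [← Real.exp_add]
    simp
  rw [hz, hA, hB, hkey]
  linear_combination (-(1 - pd) * (q ^ k)⁻¹ * Real.exp (-lam)
    * ∑ i ∈ Finset.range k, (q * lam) ^ i / i.factorial) * hXinv
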